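/- Let V be a real Euclidean space (finite-dimensional real inner product space) of dimension at least 3, let a > 0, and let Σ = {v ∈ V : ⟨v, v⟩ = a}. Let A : V → V be a linear map with adjoint A*, and let k, γ, r ∈ ℝ with k ≠ 0. If k·(⟨Ay, z⟩ + 2γ)·⟨Ay, z⟩ − 3·(⟨Ay, Ay⟩ + ⟨A*z, A*z⟩) − r = 0 for all y, z ∈ Σ, then A = 0 and r = 0. -/

import Mathlib

open scoped RealInnerProductSpace

/-- In a Euclidean space of dimension at least 3, there is a nonzero vector
orthogonal to any two given vectors. -/
lemma exists_ortho_pair {V : Type*} [NormedAddCommGroup V] [InnerProductSpace ℝ V]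
    [FiniteDimensional ℝ V] (hdim : 3 ≤ Module.finrank ℝ V) (w₁ w₂ : V) :
    ∃ y : V, y ≠ 0 ∧ ⟪y, w₁⟫ = 0 ∧ ⟪y, w₂⟫ = 0 := by
  classical
  set K : Submodule ℝ V := (ℝ ∙ w₁) ⊔ (ℝ ∙ w₂) with hKdef
  have hc1 : Module.finrank ℝ (ℝ ∙ w₁) ≤ 1 := by
    simpa using finrank_span_le_card ({w₁} : Set V)
  have hc2 : Module.finrank ℝ (ℝ ∙ w₂) ≤ 1 := by
    simpa using finrank_span_le_card ({w₂} : Set V)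
  have hsum := Submodule.finrank_sup_add_finrank_inf_eq (ℝ ∙ w₁) (ℝ ∙ w₂)
  have hK2 : Module.finrank ℝ K ≤ 2 := by
    rw [hKdef]; omega
  have hKne : Kᗮ ≠ ⊥ := by
    intro hbot
    have hKtop : K = ⊤ := Submodule.orthogonal_eq_bot_iff.mp hbot
    rw [hKtop, finrank_top] at hK2
    omega
  obtain ⟨y, hyK, hy0⟩ := Submodule.exists_mem_ne_zero_of_ne_bot hKne
  have hw₁K : w₁ ∈ K := Submodule.mem_sup_left (Submodule.mem_span_singleton_self w₁)
  have hw₂K : w₂ ∈ K := Submodule.mem_sup_right (Submodule.mem_span_singleton_self w₂)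
  refine ⟨y, hy0, ?_, ?_⟩
  · rw [real_inner_comm]; exact (Submodule.mem_orthogonal K y).mp hyK w₁ hw₁K
  · rw [real_inner_comm]; exact (Submodule.mem_orthogonal K y).mp hyK w₂ hw₂K

/-- Let `V` be a Euclidean space of dimension at least 3, `a > 0`, and
`Σ = {v : ⟨v,v⟩ = a}`. If a linear map `A : V → V` with adjoint `A*` and constants
`k ≠ 0`, `γ`, `r` satisfy
`k(⟨Ay,z⟩ + 2γ)⟨Ay,z⟩ − 3(⟨Ay,Ay⟩ + ⟨A*z,A*z⟩) − r = 0` for all `y, z ∈ Σ`,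
then `A = 0` and `r = 0`. -/
theorem sphere_bilinear_identity_forces_zero
    {V : Type*} [NormedAddCommGroup V] [InnerProductSpace ℝ V] [FiniteDimensional ℝ V]
    (hdim : 3 ≤ Module.finrank ℝ V)
    (a : ℝ) (ha : 0 < a)
    (A Astar : V →ₗ[ℝ] V)
    (hadj : ∀ y z : V, ⟪A y, z⟫ = ⟪y, Astar z⟫)
    (k γ r : ℝ) (hk : k ≠ 0)
    (h : ∀ y z : V, ⟪y, y⟫ = a → ⟪z, z⟫ = a →
      k * (⟪A y, z⟫ + 2 * γ) * ⟪A y, z⟫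
        - 3 * (⟪A y, A y⟫ + ⟪Astar z, Astar z⟫) - r = 0) :
    A = 0 ∧ r = 0 := by
  have hpos : ∀ x : V, x ≠ 0 → 0 < ⟪x, x⟫ := fun x hx =>
    lt_of_le_of_ne real_inner_self_nonneg (fun hq => hx (inner_self_eq_zero.mp hq.symm))
  set sa := Real.sqrt a with hsadef
  have hsa : sa ^ 2 = a := Real.sq_sqrt ha.le
  -- Scaling a nonzero vector to the sphere
  have hsph : ∀ y : V, y ≠ 0 → ⟪(sa / ‖y‖) • y, (sa / ‖y‖) • y⟫ = a := by
    intro y hy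
    have hny : ‖y‖ ≠ 0 := norm_ne_zero_iff.mpr hy
    rw [real_inner_smul_left, real_inner_smul_right, real_inner_self_eq_norm_sq]
    field_simp
    linear_combination hsa
  -- Step 1: eliminate γ by replacing z with -z
  have h0 : ∀ y z : V, ⟪y, y⟫ = a → ⟪z, z⟫ = a →
      k * ⟪A y, z⟫ ^ 2 - 3 * (⟪A y, A y⟫ + ⟪Astar z, Astar z⟫) - r = 0 := by
    intro y z hy hz
    have h1 := h y z hy hz
    have h2 := h y (-z) hy (by rwa [inner_neg_neg])
    simp only [map_neg, inner_neg_left, inner_neg_right, neg_neg] at h2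
    linear_combination h1 / 2 + h2 / 2
  -- Step 2: extend to all of V by homogeneity
  have hM : ∀ y z : V, a ^ 2 * (k * ⟪A y, z⟫ ^ 2)
      = 3 * a * ⟪z, z⟫ * ⟪A y, A y⟫ + 3 * a * ⟪y, y⟫ * ⟪Astar z, Astar z⟫
        + r * ⟪y, y⟫ * ⟪z, z⟫ := by
    intro y z
    by_cases hy : y = 0
    · simp [hy]
    by_cases hz : z = 0
    · simp [hz]
    have hy' := hsph y hy
    have hz' := hsph z hz
    have h0' := h0 _ _ hy' hz'
    simp only [map_smul, real_inner_smul_left, real_inner_smul_right] at h0' hy' hz'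
    linear_combination (⟪y, y⟫ * ⟪z, z⟫) * h0'
      + (3 * ⟪z, z⟫ * ⟪A y, A y⟫ - k * ⟪A y, z⟫ ^ 2 * (sa / ‖z‖) ^ 2 * ⟪z, z⟫) * hy'
      + (3 * ⟪y, y⟫ * ⟪Astar z, Astar z⟫ - a * k * ⟪A y, z⟫ ^ 2) * hz'
  -- Step 3: for vectors of equal norm, Astar values agree up to sign
  have hP : ∀ z₁ z₂ : V, ⟪z₁, z₁⟫ = ⟪z₂, z₂⟫ →
      Astar z₁ = Astar z₂ ∨ Astar z₁ = -Astar z₂ := by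
    intro z₁ z₂ hzz
    set w₁ := Astar z₁ with hw₁
    set w₂ := Astar z₂ with hw₂
    have hD : ∀ y : V, a ^ 2 * k * (⟪y, w₁⟫ ^ 2 - ⟪y, w₂⟫ ^ 2)
        = 3 * a * ⟪y, y⟫ * (⟪w₁, w₁⟫ - ⟪w₂, w₂⟫) := by
      intro y
      have h1 := hM y z₁
      have h2 := hM y z₂
      rw [hadj y z₁] at h1
      rw [hadj y z₂] at h2
      linear_combination h1 - h2 + (3 * a * ⟪A y, A y⟫ + r * ⟪y, y⟫) * hzz
    obtain ⟨y₀, hy0, ho1, ho2⟩ := exists_ortho_pair hdim w₁ w₂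
    have hy0' : 0 < ⟪y₀, y₀⟫ := hpos y₀ hy0
    have hn : ⟪w₁, w₁⟫ = ⟪w₂, w₂⟫ := by
      have hD0 := hD y₀
      rw [ho1, ho2] at hD0
      have hz : (3 * a * ⟪y₀, y₀⟫) * (⟪w₁, w₁⟫ - ⟪w₂, w₂⟫) = 0 := by
        linear_combination -hD0
      have hfac : (3 : ℝ) * a * ⟪y₀, y₀⟫ ≠ 0 := by positivity
      have := (mul_eq_zero.mp hz).resolve_left hfac
      linarith
    have hak : a ^ 2 * k ≠ 0 := mul_ne_zero (pow_ne_zero _ ha.ne') hk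
    have hsq : ∀ y : V, ⟪y, w₁⟫ ^ 2 = ⟪y, w₂⟫ ^ 2 := by
      intro y
      have hDy := hD y
      rw [hn] at hDy
      have hz : (a ^ 2 * k) * (⟪y, w₁⟫ ^ 2 - ⟪y, w₂⟫ ^ 2) = 0 := by
        linear_combination hDy
      have := (mul_eq_zero.mp hz).resolve_left hak
      linarith
    have h11 := hsq w₁
    have hfac : (⟪w₁, w₂⟫ - ⟪w₁, w₁⟫) * (⟪w₁, w₂⟫ + ⟪w₁, w₁⟫) = 0 := by
      linear_combination -h11
    rcases mul_eq_zero.mp hfac with hc | hc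
    · left
      have hzero : ⟪w₁ - w₂, w₁ - w₂⟫ = 0 := by
        rw [inner_sub_left, inner_sub_right, inner_sub_right]
        linear_combination (-1 : ℝ) * hn + (-2 : ℝ) * hc + (-1 : ℝ) * real_inner_comm w₁ w₂
      have := inner_self_eq_zero.mp hzero
      exact sub_eq_zero.mp this
    · right
      have hzero : ⟪w₁ + w₂, w₁ + w₂⟫ = 0 := by
        rw [inner_add_left, inner_add_right, inner_add_right]
        linear_combination (-1 : ℝ) * hn + (2 : ℝ) * hc + (1 : ℝ) * real_inner_comm w₁ w₂
      have := inner_self_eq_zero.mp hzero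
      exact eq_neg_of_add_eq_zero_left this
  -- Step 4: Astar is identically zero
  have hAstar0 : ∀ z : V, Astar z = 0 := by
    intro z₀
    by_contra hw
    have hz0 : z₀ ≠ 0 := by
      intro hz0; rw [hz0, map_zero] at hw; exact hw rfl
    obtain ⟨y₁, hy1, hperp, -⟩ := exists_ortho_pair hdim z₀ z₀
    have hny1 : ‖y₁‖ ≠ 0 := norm_ne_zero_iff.mpr hy1
    set z₁ : V := (‖z₀‖ / ‖y₁‖) • y₁ with hz₁def
    have hperp' : ⟪z₀, z₁⟫ = 0 := by
      rw [hz₁def, real_inner_smul_right, real_inner_comm, hperp, mul_zero]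
    have hzz : ⟪z₀, z₀⟫ = ⟪z₁, z₁⟫ := by
      rw [hz₁def, real_inner_smul_left, real_inner_smul_right,
        real_inner_self_eq_norm_sq, real_inner_self_eq_norm_sq]
      field_simp
    have hpp : ⟪z₀ + z₁, z₀ + z₁⟫ = ⟪z₀ - z₁, z₀ - z₁⟫ := by
      rw [inner_add_left, inner_add_right, inner_add_right,
        inner_sub_left, inner_sub_right, inner_sub_right]
      linear_combination (-2 : ℝ) * real_inner_comm z₁ z₀ + 4 * hperp'
    have hu := hP z₀ z₁ hzz
    have hc := hP (z₀ + z₁) (z₀ - z₁) hpp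
    set w := Astar z₀ with hwdef
    have hnw : 0 < ⟪w, w⟫ := hpos w hw
    -- turn the vector equations into scalar equations by pairing with w
    have ht : ⟪w, Astar z₁⟫ = ⟪w, w⟫ ∨ ⟪w, Astar z₁⟫ = -⟪w, w⟫ := by
      rcases hu with hu | hu
      · left; rw [hu]
      · right
        have hu' : Astar z₁ = -w := by rw [hu, neg_neg]
        rw [hu', inner_neg_right]
    have hcs : ⟪w, w⟫ + ⟪w, Astar z₁⟫ = ⟪w, w⟫ - ⟪w, Astar z₁⟫ ∨
        ⟪w, w⟫ + ⟪w, Astar z₁⟫ = -(⟪w, w⟫ - ⟪w, Astar z₁⟫) := by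
      rcases hc with hc | hc
      · left
        have := congrArg (fun v => ⟪w, v⟫) hc
        simpa only [map_add, map_sub, inner_add_right, inner_sub_right] using this
      · right
        have := congrArg (fun v => ⟪w, v⟫) hc
        simpa only [map_add, map_sub, inner_add_right, inner_sub_right,
          inner_neg_right] using this
    rcases ht with ht | ht <;> rcases hcs with hcs | hcs <;> rw [ht] at hcs <;> linarith
  -- Conclude A = 0
  have hA0 : A = 0 := by
    ext y
    have hz : ⟪A y, A y⟫ = 0 := by
      rw [hadj y (A y), hAstar0, inner_zero_right]
    simpa using inner_self_eq_zero.mp hz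
  refine ⟨hA0, ?_⟩
  -- Conclude r = 0 using any sphere point
  obtain ⟨y, hy, -, -⟩ := exists_ortho_pair hdim 0 0
  have hys := hsph y hy
  have hr := h _ _ hys hys
  rw [hA0] at hr
  simp only [LinearMap.zero_apply, hAstar0, inner_zero_left, inner_zero_right] at hr
  linarith
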